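/- Let Y be an integrable random vector in ℝ^D. Then E[Y] lies in the relative interior of the convex hull of the support of the distribution of Y. -/

import Mathlib

open MeasureTheory Set Filter Topology

/-- The (topological) support of a measure `ν` on `ℝ^D`: the set of points all of whose
neighborhoods have positive measure.  This is the smallest closed set of full measure. -/
def measureSupport {E : Type*} [TopologicalSpace E] [MeasurableSpace E] (ν : Measure E) : Set E :=
  {x | ∀ U ∈ nhds x, 0 < ν U}

lemma measure_compl_measureSupport {E : Type*} [TopologicalSpace E]
    [SecondCountableTopology E] [MeasurableSpace E] (ν : Measure E) :
    ν (measureSupport ν)ᶜ = 0 := by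
  have hB := TopologicalSpace.isBasis_countableBasis E
  have hcount : (TopologicalSpace.countableBasis E).Countable :=
    TopologicalSpace.countable_countableBasis E
  have hnull : ν (⋃₀ {U ∈ TopologicalSpace.countableBasis E | ν U = 0}) = 0 :=
    (measure_sUnion_null_iff (hcount.mono (sep_subset _ _))).mpr fun U hU => hU.2
  refine measure_mono_null (fun x hx => ?_) hnull
  simp only [measureSupport, mem_compl_iff, mem_setOf_eq, not_forall] at hx
  obtain ⟨U, hU, hνU⟩ := hx
  have hU0 : ν U = 0 := le_zero_iff.mp (not_lt.mp hνU)
  obtain ⟨t, htB, hxt, htU⟩ := hB.mem_nhds_iff.mp hU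
  exact ⟨t, ⟨htB, le_antisymm (hU0 ▸ measure_mono htU) (zero_le)⟩, hxt⟩

lemma isClosed_measureSupport {E : Type*} [TopologicalSpace E] [MeasurableSpace E]
    (ν : Measure E) : IsClosed (measureSupport ν) := by
  rw [← isOpen_compl_iff]
  rw [isOpen_iff_mem_nhds]
  intro x hx
  simp only [measureSupport, mem_compl_iff, mem_setOf_eq, not_forall] at hx
  obtain ⟨U, hU, hνU⟩ := hx
  obtain ⟨V, hVU, hVopen, hxV⟩ := mem_nhds_iff.mp hU
  filter_upwards [hVopen.mem_nhds hxV] with y hy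
  simp only [measureSupport, mem_compl_iff, mem_setOf_eq, not_forall]
  exact ⟨V, hVopen.mem_nhds hy, fun h => hνU (h.trans_le (measure_mono hVU))⟩

lemma exists_sep {E : Type*} [NormedAddCommGroup E] [NormedSpace ℝ E] [FiniteDimensional ℝ E]
    {C : Set E} (hC : Convex ℝ C) {c : E} (hc : c ∈ C) {b : E} (hb : b ∈ closure C)
    (hbi : b ∉ intrinsicInterior ℝ C) :
    ∃ F : E →L[ℝ] ℝ, (∀ x ∈ C, F x ≤ F b) ∧ ∃ x ∈ C, F x < F b := by
  classical
  -- translate so that `0 ∈ C'`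
  set C' : Set E := (fun x => -c + x) '' C with hC'def
  have hC' : Convex ℝ C' := hC.translate (-c)
  have h0 : (0 : E) ∈ C' := ⟨c, hc, by simp⟩
  have hb' : -c + b ∈ closure C' := by
    have h1 : -c + b ∈ ⇑(Homeomorph.addLeft (-c)) '' closure C := ⟨b, hb, rfl⟩
    rw [(Homeomorph.addLeft (-c)).image_closure C] at h1
    exact h1
  have hbi' : -c + b ∉ intrinsicInterior ℝ C' := by
    intro hmem
    apply hbi
    have himg : C' = (AffineIsometryEquiv.constVAdd ℝ E (-c)).toAffineIsometry '' C := by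
      rw [hC'def]
      congr 1
    rw [himg, AffineIsometry.image_intrinsicInterior] at hmem
    obtain ⟨y, hy, hyeq⟩ := hmem
    have : y = b := by
      have : -c + y = -c + b := hyeq
      exact add_left_cancel this
    exact this ▸ hy
  -- work inside the span of `C'`
  set W : Submodule ℝ E := Submodule.span ℝ C' with hWdef
  have hCW : C' ⊆ (W : Set E) := Submodule.subset_span
  have hWclosed : IsClosed (W : Set E) := Submodule.closed_of_finiteDimensional W
  have hb'W : -c + b ∈ W := hWclosed.closure_subset_iff.mpr hCW hb'
  set C₀ : Set W := ((↑) : W → E) ⁻¹' C' with hC₀def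
  have hC₀ : Convex ℝ C₀ := hC'.linear_preimage W.subtype
  have h0' : (0 : W) ∈ C₀ := by
    simp only [hC₀def, Set.mem_preimage, Submodule.coe_zero]
    exact h0
  have himgC₀ : ((↑) : W → E) '' C₀ = C' := by
    rw [hC₀def, Set.image_preimage_eq_inter_range, Subtype.range_coe]
    exact Set.inter_eq_self_of_subset_left hCW
  have hsp : Submodule.span ℝ C₀ = ⊤ := by
    apply Submodule.map_injective_of_injective W.injective_subtype
    rw [Submodule.map_span, Submodule.map_top, Submodule.range_subtype]
    show Submodule.span ℝ (((↑) : W → E) '' C₀) = W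
    rw [himgC₀, hWdef]
  have hspan : affineSpan ℝ C₀ = ⊤ := by
    apply AffineSubspace.coe_injective
    have h2 : affineSpan ℝ (insert (0 : W) C₀) = affineSpan ℝ C₀ := by
      rw [Set.insert_eq_of_mem h0']
    rw [← h2]
    show (affineSpan ℝ (insert (0 : W) C₀) : Set W) = ((⊤ : AffineSubspace ℝ W) : Set W)
    rw [affineSpan_insert_zero, hsp]
    simp
  have hint : (interior C₀).Nonempty := hC₀.interior_nonempty_iff_affineSpan_eq_top.mpr hspan
  obtain ⟨z, hz⟩ := hint
  set b₀ : W := ⟨-c + b, hb'W⟩ with hb₀def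
  have hb₀cl : b₀ ∈ closure C₀ := by
    rw [IsEmbedding.subtypeVal.closure_eq_preimage_closure_image C₀]
    show ((↑) : W → E) b₀ ∈ closure (((↑) : W → E) '' C₀)
    rw [himgC₀]
    exact hb'
  have hb₀int : b₀ ∉ interior C₀ := by
    intro hmem
    apply hbi'
    have himg2 := W.subtypeₗᵢ.toAffineIsometry.image_intrinsicInterior C₀
    have : (b₀ : E) ∈ intrinsicInterior ℝ (W.subtypeₗᵢ.toAffineIsometry '' C₀) := by
      rw [himg2]
      exact ⟨b₀, interior_subset_intrinsicInterior hmem, rfl⟩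
    have heq : W.subtypeₗᵢ.toAffineIsometry '' C₀ = C' := himgC₀
    rwa [heq] at this
  -- separate `b₀` from the interior of `C₀`
  obtain ⟨f, hf⟩ := geometric_hahn_banach_open_point (hC₀.interior) isOpen_interior hb₀int
  -- on all of `C₀`, `f ≤ f b₀`
  have hkey : ∀ x ∈ C₀, f x ≤ f b₀ := by
    intro x hx
    have hseg : ∀ t : ℝ, t ∈ Set.Ioo (0 : ℝ) 1 → f (t • z + (1 - t) • x) < f b₀ := by
      intro t ht
      apply hf
      apply hC₀.openSegment_interior_self_subset_interior hz hx
      exact ⟨t, 1 - t, ht.1, by linarith [ht.2], by ring, rfl⟩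
    have hne : (nhdsWithin (0:ℝ) (Set.Ioo (0:ℝ) 1)).NeBot := by
      apply mem_closure_iff_nhdsWithin_neBot.mp
      rw [closure_Ioo (by norm_num : (0:ℝ) ≠ 1)]
      exact ⟨le_refl _, by norm_num⟩
    have hcont : Continuous fun t : ℝ => f (t • z + (1 - t) • x) := by
      exact f.continuous.comp ((continuous_id.smul continuous_const).add
        ((continuous_const.sub continuous_id).smul continuous_const))
    have htend : Filter.Tendsto (fun t : ℝ => f (t • z + (1 - t) • x))
        (nhdsWithin (0:ℝ) (Set.Ioo (0:ℝ) 1)) (nhds (f x)) := by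
      have h0val : f ((0:ℝ) • z + (1 - 0) • x) = f x := by simp
      have h3 := (hcont.tendsto 0).mono_left
        (nhdsWithin_le_nhds (s := Set.Ioo (0:ℝ) 1))
      simpa using h3
    exact le_of_tendsto htend (eventually_nhdsWithin_of_forall fun t ht => (hseg t ht).le)
  -- extend `f` to `E`
  obtain ⟨g, hg⟩ := LinearMap.exists_extend (f : W →ₗ[ℝ] ℝ) (p := W)
  set F : E →L[ℝ] ℝ := LinearMap.toContinuousLinearMap g with hFdef
  have hFW : ∀ w : W, F (w : E) = f w := by
    intro w
    have := LinearMap.congr_fun hg w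
    simpa [hFdef] using this
  refine ⟨F, ?_, ?_⟩
  · intro x hx
    have hx' : -c + x ∈ C' := ⟨x, hx, rfl⟩
    have hxW : -c + x ∈ W := hCW hx'
    have hxC₀ : (⟨-c + x, hxW⟩ : W) ∈ C₀ := hx'
    have := hkey _ hxC₀
    rw [← hFW, ← hFW] at this
    simp only [hb₀def] at this
    have h2 : F (-c) + F x ≤ F (-c) + F b := by
      rw [← map_add, ← map_add]; exact this
    linarith
  · have hzC₀ : z ∈ C₀ := interior_subset hz
    have hzC' : (z : E) ∈ C' := hzC₀
    obtain ⟨x, hx, hxz⟩ := hzC'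
    refine ⟨x, hx, ?_⟩
    have := hf z hz
    rw [← hFW, ← hFW] at this
    simp only [hb₀def] at this
    rw [← hxz] at this
    have h2 : F (-c) + F x < F (-c) + F b := by
      rw [← map_add, ← map_add]; exact this
    linarith

/-- The expectation of an integrable random vector `Y` in `ℝ^D` lies in the relative
interior of the convex hull of the support of the distribution of `Y`. -/
theorem mean_mem_relativeInterior_convexHull_support
    {Ω : Type*} [MeasurableSpace Ω] (μ : Measure Ω) [IsProbabilityMeasure μ]
    (D : ℕ) (Y : Ω → (Fin D → ℝ)) (hY : Measurable Y) (hint : Integrable Y μ) :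
    (∫ ω, Y ω ∂μ) ∈ intrinsicInterior ℝ (convexHull ℝ (measureSupport (μ.map Y))) := by
  set ν := μ.map Y with hν
  haveI : IsProbabilityMeasure ν := Measure.isProbabilityMeasure_map hY.aemeasurable
  set S := measureSupport ν with hSdef
  have hS0 : ν Sᶜ = 0 := measure_compl_measureSupport ν
  have haeS : ∀ᵐ x ∂ν, x ∈ S := by
    rw [ae_iff]
    exact hS0
  have hid : Integrable (fun x => x) ν := by
    have := (integrable_map_measure (f := Y) (g := fun x => x)
      aestronglyMeasurable_id hY.aemeasurable).mpr hint
    exact this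
  have hbeq : ∫ x, x ∂ν = ∫ ω, Y ω ∂μ := by
    rw [hν]
    exact integral_map hY.aemeasurable aestronglyMeasurable_id
  set C := convexHull ℝ S with hCdef
  have hCconv : Convex ℝ C := convex_convexHull ℝ S
  have hSne : S.Nonempty := by
    by_contra hne
    rw [Set.not_nonempty_iff_eq_empty] at hne
    have : ν Set.univ = 0 := by
      rw [← Set.compl_empty, ← hne]
      exact hS0
    simp [measure_univ] at this
  obtain ⟨c, hcS⟩ := hSne
  have hcC : c ∈ C := subset_convexHull ℝ S hcS
  have hbcl : (∫ ω, Y ω ∂μ) ∈ closure C := by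
    rw [← hbeq]
    exact hCconv.closure.integral_mem isClosed_closure
      (haeS.mono fun x hx => subset_closure (subset_convexHull ℝ S hx)) hid
  by_contra hbi
  obtain ⟨F, hFle, x₀, hx₀C, hx₀lt⟩ := exists_sep hCconv hcC hbcl hbi
  set b := ∫ ω, Y ω ∂μ with hbdef
  have hFcomp : Integrable (fun x => F x) ν := F.integrable_comp hid
  have hFint : ∫ x, F x ∂ν = F b := by
    rw [← hbeq]
    exact (F.integral_comp_comm hid)
  have hnonneg : 0 ≤ᵐ[ν] fun x => F b - F x :=
    haeS.mono fun x hx => sub_nonneg.2 (hFle x (subset_convexHull ℝ S hx))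
  have hintg : Integrable (fun x => F b - F x) ν := (integrable_const _).sub hFcomp
  have hzero : ∫ x, (F b - F x) ∂ν = 0 := by
    rw [integral_sub (integrable_const _) hFcomp, integral_const, hFint]
    simp
  have hae0 : (fun x => F b - F x) =ᵐ[ν] 0 :=
    (integral_eq_zero_iff_of_nonneg_ae hnonneg hintg).mp hzero
  have hnull : ν {y | F y ≠ F b} = 0 := by
    have h1 : ν {x | ¬ (F b - F x = 0)} = 0 := by
      have := hae0
      rw [Filter.EventuallyEq, ae_iff] at this
      simpa using this
    refine measure_mono_null (fun y hy => ?_) h1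
    exact fun h => hy ((sub_eq_zero.mp h).symm)
  have hT : S ⊆ {x | F x = F b} := by
    intro x hxS
    by_contra hne
    have hopen : IsOpen {y | F y ≠ F b} :=
      (isClosed_eq F.continuous continuous_const).isOpen_compl
    have hpos : 0 < ν {y | F y ≠ F b} := hxS _ (hopen.mem_nhds hne)
    exact absurd hnull hpos.ne'
  have hCT : C ⊆ {x | F x = F b} :=
    convexHull_min hT (convex_hyperplane (IsLinearMap.mk F.map_add F.map_smul) (F b))
  exact absurd (hCT hx₀C) (ne_of_lt hx₀lt)
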